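/- arXiv:0904.3251 — 6 statements merged into one kernel-verified Lean document; each statement's English description precedes it below -/
import Mathlib

section
/- (Ryser's formula for rectangular matrices) Let A = (a_{ij}) be an m×n matrix over a commutative ring with m ≤ n. For X ⊆ {1,...,n} let a_{iX} = Σ_{j ∈ X} a_{ij}. Then per A = Σ_{X ⊆ {1,...,n}, |X| ≤ m} (−1)^{m−|X|} · C(n−|X|, m−|X|) · a_{1X} a_{2X} ⋯ a_{mX}, where C(·,·) is the binomial coefficient. -/
open Finset

lemma aux_alt {R : Type*} [CommRing R] (d : ℕ) :
    ∑ t ∈ Finset.range (d+1), (-1:R)^(d-t) * (d.choose t : R)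
      = if d = 0 then 1 else 0 := by
  have h := Finset.sum_range_reflect (fun t => (-1:R)^(d-t) * (d.choose t : R)) (d+1)
  simp only [Nat.add_sub_cancel] at h
  rw [← h]
  have : ∀ j ∈ Finset.range (d+1),
      (-1:R)^(d-(d-j)) * (d.choose (d-j) : R) = (-1:R)^j * (d.choose j : R) := by
    intro j hj
    rw [Finset.mem_range] at hj
    rw [Nat.sub_sub_self (by omega), Nat.choose_symm (by omega)]
  rw [Finset.sum_congr rfl this]
  have := Int.alternating_sum_range_choose (n := d)
  have := congrArg (fun z : ℤ => (z : R)) this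
  push_cast at this
  simpa using this

lemma aux_sum {R : Type*} [CommRing R] {d N : ℕ} (hdN : d ≤ N) :
    ∑ t ∈ Finset.range (N+1), (N.choose t : R) *
        (if t ≤ d then (-1:R)^(d-t) * ((N-t).choose (d-t) : R) else 0)
      = if d = 0 then 1 else 0 := by
  rw [← Finset.sum_subset (Finset.range_subset_range.2 (by omega : d+1 ≤ N+1))
    (by intro t ht hnt; simp only [Finset.mem_range] at *; rw [if_neg (by omega)]; ring)]
  have key : ∀ t ∈ Finset.range (d+1),
      (N.choose t : R) * (if t ≤ d then (-1:R)^(d-t) * ((N-t).choose (d-t) : R) else 0)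
        = (N.choose d : R) * ((-1:R)^(d-t) * (d.choose t : R)) := by
    intro t ht
    rw [Finset.mem_range] at ht
    rw [if_pos (by omega)]
    have hc := Nat.choose_mul (n := N) (k := d) (s := t) (by omega)
    have : (N.choose t : R) * ((N-t).choose (d-t) : R) = (N.choose d : R) * (d.choose t : R) := by
      rw [← Nat.cast_mul, ← Nat.cast_mul, ← hc, Nat.mul_comm]
    linear_combination (-1:R)^(d-t) * this
  rw [Finset.sum_congr rfl key, ← Finset.mul_sum, aux_alt]
  split <;> simp_all

lemma coeff_sum {R : Type*} [CommRing R] {m n : ℕ} (hmn : m ≤ n)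
    (S : Finset (Fin n)) (hS : S.card ≤ m) :
    ∑ X ∈ ((Finset.univ : Finset (Fin n)).powerset.filter (fun X => X.card ≤ m)).filter
        (fun X => S ⊆ X),
      (-1:R)^(m - X.card) * ((n - X.card).choose (m - X.card) : R)
    = if S.card = m then 1 else 0 := by
  set k := S.card with hk
  rw [Finset.filter_comm, Finset.sum_filter]
  rw [Finset.sum_nbij' (i := fun X => X \ S) (j := fun Y => S ∪ Y)
    (t := Sᶜ.powerset)
    (g := fun Y => if k + Y.card ≤ m then
      (-1:R)^(m - (k + Y.card)) * ((n - (k + Y.card)).choose (m - (k + Y.card)) : R) else 0)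
    (by intro X hX
        simp only [Finset.mem_filter, Finset.mem_powerset] at *
        exact fun x hx => Finset.mem_compl.2 fun hxS =>
          (Finset.mem_sdiff.1 hx).2 hxS)
    (by intro Y hY
        simp only [Finset.mem_filter, Finset.mem_powerset] at *
        exact ⟨Finset.subset_univ _, Finset.subset_union_left⟩)
    (by intro X hX
        simp only [Finset.mem_filter, Finset.mem_powerset] at hX
        exact Finset.union_sdiff_of_subset hX.2)
    (by intro Y hY
        simp only [Finset.mem_powerset] at hY
        exact Finset.union_sdiff_cancel_left (Finset.disjoint_left.2
          fun a ha hA => Finset.mem_compl.1 (hY hA) ha))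
    (by intro X hX
        simp only [Finset.mem_filter, Finset.mem_powerset] at hX
        have : k + (X \ S).card = X.card := by
          rw [hk, ← Finset.card_sdiff_add_card_eq_card hX.2]; ring
        simp only [this])]
  rw [Finset.sum_powerset]
  have hcompl : Sᶜ.card = n - k := by
    rw [Finset.card_compl, Fintype.card_fin, hk]
  have step : ∀ t ∈ Finset.range (Sᶜ.card + 1),
      (∑ Y ∈ Finset.powersetCard t Sᶜ, if k + Y.card ≤ m then
        (-1:R)^(m - (k + Y.card)) * ((n - (k + Y.card)).choose (m - (k + Y.card)) : R) else 0)
      = ((n-k).choose t : R) * (if t ≤ m - k then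
          (-1:R)^((m-k)-t) * (((n-k)-t).choose ((m-k)-t) : R) else 0) := by
    intro t ht
    have : ∀ Y ∈ Finset.powersetCard t Sᶜ,
        (if k + Y.card ≤ m then
          (-1:R)^(m - (k + Y.card)) * ((n - (k + Y.card)).choose (m - (k + Y.card)) : R) else 0)
        = (if t ≤ m - k then
          (-1:R)^((m-k)-t) * (((n-k)-t).choose ((m-k)-t) : R) else 0) := by
      intro Y hY
      have hYc : Y.card = t := (Finset.mem_powersetCard.1 hY).2
      rw [hYc]
      have h2 : m - (k + t) = (m - k) - t := by omega
      have h3 : n - (k + t) = (n - k) - t := by omega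
      by_cases hc : k + t ≤ m
      · rw [if_pos hc, if_pos (by omega), h2, h3]
      · rw [if_neg hc, if_neg (by omega)]
    rw [Finset.sum_congr rfl this, Finset.sum_const, Finset.card_powersetCard, hcompl,
      nsmul_eq_mul]
  rw [Finset.sum_congr rfl step, hcompl, aux_sum (by omega : m - k ≤ n - k)]
  split_ifs with h1 h2 h3
  · rfl
  · omega
  · omega
  · rfl

/-- Ryser's formula for rectangular matrices over a commutative ring. -/
theorem ryser_rectangular {m n : ℕ} {R : Type*} [CommRing R] (hmn : m ≤ n)
    (A : Fin m → Fin n → R) :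
    (∑ σ ∈ Finset.univ.filter (fun σ : Fin m → Fin n => Function.Injective σ),
        ∏ i, A i (σ i)) =
      ∑ X ∈ (Finset.univ : Finset (Fin n)).powerset.filter (fun X => X.card ≤ m),
        (-1 : R) ^ (m - X.card) * ((n - X.card).choose (m - X.card) : R) *
          ∏ i, ∑ j ∈ X, A i j := by
  have piF : ∀ X : Finset (Fin n), Fintype.piFinset (fun _ : Fin m => X)
      = Finset.univ.filter (fun g : Fin m → Fin n => ∀ i, g i ∈ X) := by
    intro X; ext g; simp [Fintype.mem_piFinset]
  have hR : ∀ X ∈ (Finset.univ : Finset (Fin n)).powerset.filter (fun X => X.card ≤ m),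
      (-1 : R) ^ (m - X.card) * ((n - X.card).choose (m - X.card) : R) *
          ∏ i, ∑ j ∈ X, A i j
      = ∑ g : Fin m → Fin n, if (∀ i, g i ∈ X) then
          (-1 : R) ^ (m - X.card) * ((n - X.card).choose (m - X.card) : R) *
            ∏ i, A i (g i) else 0 := by
    intro X _
    rw [Finset.prod_univ_sum, piF X, Finset.mul_sum, Finset.sum_filter]
  rw [Finset.sum_congr rfl hR, Finset.sum_comm, Finset.sum_filter]
  apply Finset.sum_congr rfl
  intro g _
  rw [← Finset.sum_filter, ← Finset.sum_mul]
  have hfc : (((Finset.univ : Finset (Fin n)).powerset.filter (fun X => X.card ≤ m)).filter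
        (fun X => ∀ i, g i ∈ X))
      = (((Finset.univ : Finset (Fin n)).powerset.filter (fun X => X.card ≤ m)).filter
        (fun X => Finset.univ.image g ⊆ X)) := by
    apply Finset.filter_congr
    intro X _
    simp [Finset.image_subset_iff]
  rw [hfc, coeff_sum hmn _ (le_trans (Finset.card_image_le) (by simp))]
  have hiff : ((Finset.univ.image g).card = m) ↔ Function.Injective g := by
    have h1 := Finset.card_image_iff (s := (Finset.univ : Finset (Fin m))) (f := g)
    simpa [Set.injOn_univ] using h1
  by_cases hg : Function.Injective g
  · rw [if_pos hg, if_pos (hiff.2 hg), one_mul]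
  · rw [if_neg hg, if_neg (fun h => hg (hiff.1 h)), zero_mul]
end

section
/- (Transposed Ryser formula) Let A = (a_{ij}) be an m×n matrix over a commutative ring with m ≤ n. For X ⊆ {1,...,m} let a_{Xj} = Σ_{i ∈ X} a_{ij}. Then per A = Σ_{X ⊆ {1,...,m}} (−1)^{m−|X|} Σ_p a_{X1}^{p_1} a_{X2}^{p_2} ⋯ a_{Xn}^{p_n}, where the inner sum is over all binary sequences p = p_1 p_2 ⋯ p_n ∈ {0,1}^n with p_1 + p_2 + ⋯ + p_n = m. -/
open Finset

section Ryser

variable {m n : ℕ} {R : Type*} [CommRing R]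

private def psupp (g : Fin n → Option (Fin m)) : Finset (Fin n) :=
  univ.filter fun j => (g j).isSome

private def tset (g : Fin n → Option (Fin m)) : Finset (Fin m) :=
  univ.filter fun i => ∃ j, g j = some i

private def pof (g : Fin n → Option (Fin m)) : Fin n → Fin 2 :=
  fun j => if (g j).isSome then 1 else 0

private lemma fin2cases : ∀ a : Fin 2, a = 0 ∨ a = 1 := by decide

private lemma sum_pof (g : Fin n → Option (Fin m)) :
    ∑ j, ((pof g j : Fin 2) : ℕ) = (psupp g).card := by
  rw [psupp, Finset.card_filter]
  refine Finset.sum_congr rfl fun j _ => ?_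
  by_cases h : (g j).isSome <;> simp [pof, h]

private lemma mem_piFinset_iff (p : Fin n → Fin 2) (g : Fin n → Option (Fin m)) :
    g ∈ Fintype.piFinset (fun j => if p j = 1 then (univ : Finset (Fin m)).image some
        else ({none} : Finset (Option (Fin m)))) ↔ pof g = p := by
  rw [Fintype.mem_piFinset, funext_iff]
  refine forall_congr' fun j => ?_
  rcases fin2cases (p j) with h | h <;> rw [h] <;>
    cases hg : g j <;> simp [pof, hg, eq_comm]

private lemma step1 (A : Fin m → Fin n → R) (X : Finset (Fin m)) :
    (∑ p ∈ univ.filter (fun p : Fin n → Fin 2 => ∑ j, (p j : ℕ) = m),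
        ∏ j, (∑ i ∈ X, A i j) ^ (p j : ℕ))
    = ∑ g ∈ univ.filter (fun g : Fin n → Option (Fin m) => (psupp g).card = m),
        ∏ j, (g j).elim 1 (fun i => if i ∈ X then A i j else 0) := by
  have key : ∀ p : Fin n → Fin 2,
      (∏ j, (∑ i ∈ X, A i j) ^ (p j : ℕ))
      = ∑ g ∈ Fintype.piFinset (fun j => if p j = 1 then (univ : Finset (Fin m)).image some
            else ({none} : Finset (Option (Fin m)))),
          ∏ j, (g j).elim 1 (fun i => if i ∈ X then A i j else 0) := by
    intro p
    rw [← Finset.prod_univ_sum (fun j => if p j = 1 then (univ : Finset (Fin m)).image some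
          else ({none} : Finset (Option (Fin m))))
        (fun j z => z.elim 1 (fun i => if i ∈ X then A i j else 0))]
    refine Finset.prod_congr rfl fun j _ => ?_
    rcases fin2cases (p j) with h | h <;> rw [h]
    · simp
    · rw [if_pos rfl, Finset.sum_image (by simp [Option.some_injective])]
      simp [Finset.sum_ite_mem]
  have hpi : ∀ p ∈ univ.filter (fun p : Fin n → Fin 2 => ∑ j, (p j : ℕ) = m),
      Fintype.piFinset (fun j => if p j = 1 then (univ : Finset (Fin m)).image some
            else ({none} : Finset (Option (Fin m))))
      = (univ.filter (fun g : Fin n → Option (Fin m) => (psupp g).card = m)).filter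
          (fun g => pof g = p) := by
    intro p hp
    simp only [mem_filter, mem_univ, true_and] at hp
    ext g
    rw [mem_piFinset_iff]
    simp only [mem_filter, mem_univ, true_and]
    constructor
    · intro h
      refine ⟨?_, h⟩
      rw [← sum_pof g, h]
      exact hp
    · exact fun h => h.2
  calc (∑ p ∈ univ.filter (fun p : Fin n → Fin 2 => ∑ j, (p j : ℕ) = m),
        ∏ j, (∑ i ∈ X, A i j) ^ (p j : ℕ))
      = ∑ p ∈ univ.filter (fun p : Fin n → Fin 2 => ∑ j, (p j : ℕ) = m),
          ∑ g ∈ (univ.filter (fun g : Fin n → Option (Fin m) => (psupp g).card = m)).filter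
            (fun g => pof g = p),
          ∏ j, (g j).elim 1 (fun i => if i ∈ X then A i j else 0) := by
        refine Finset.sum_congr rfl fun p hp => ?_
        rw [key p, hpi p hp]
    _ = _ := by
        refine Finset.sum_fiberwise_of_maps_to ?_ _
        intro g hg
        simp only [mem_filter, mem_univ, true_and] at hg ⊢
        rw [sum_pof, hg]

private lemma step3 (T : Finset (Fin m)) (c : R) :
    (∑ X : Finset (Fin m), (-1 : R) ^ (m - X.card) * (if T ⊆ X then c else 0))
    = if T = univ then c else 0 := by
  have reindex : (∑ X : Finset (Fin m), (-1 : R) ^ (m - X.card) * (if T ⊆ X then c else 0))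
      = ∑ Z : Finset (Fin m), (-1 : R) ^ Z.card * (if Z ⊆ Tᶜ then c else 0) := by
    refine Finset.sum_nbij' (fun X => Xᶜ) (fun Z => Zᶜ) (fun _ _ => mem_univ _)
      (fun _ _ => mem_univ _) (fun X _ => compl_compl X) (fun Z _ => compl_compl Z) ?_
    intro X _
    rw [Finset.card_compl, Fintype.card_fin]
    have hiff : Xᶜ ⊆ Tᶜ ↔ T ⊆ X := by rw [Finset.subset_compl_comm, compl_compl]
    exact congrArg _ (if_congr hiff.symm rfl rfl)
  rw [reindex]
  have h1 : ∀ Z : Finset (Fin m), (-1 : R) ^ Z.card * (if Z ⊆ Tᶜ then c else 0)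
      = if Z ∈ Tᶜ.powerset then (-1 : R) ^ Z.card * c else 0 := by
    intro Z
    by_cases h : Z ⊆ Tᶜ <;> simp [h, Finset.mem_powerset]
  have h2 : (∑ Z ∈ Tᶜ.powerset, (-1 : R) ^ Z.card) = if Tᶜ = ∅ then 1 else 0 := by
    calc (∑ Z ∈ Tᶜ.powerset, (-1 : R) ^ Z.card)
        = ((∑ Z ∈ Tᶜ.powerset, (-1 : ℤ) ^ Z.card : ℤ) : R) := by push_cast; rfl
      _ = _ := by rw [Finset.sum_powerset_neg_one_pow_card]; split <;> simp
  rw [Finset.sum_congr rfl fun Z _ => h1 Z, ← Finset.sum_filter,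
    Finset.filter_mem_eq_inter, Finset.univ_inter, ← Finset.sum_mul, h2]
  by_cases h : T = univ <;> simp [h, Finset.compl_eq_empty_iff]

private lemma indicator_eq (A : Fin m → Fin n → R) (X : Finset (Fin m))
    (g : Fin n → Option (Fin m)) :
    (∏ j, (g j).elim 1 (fun i => if i ∈ X then A i j else 0))
    = if tset g ⊆ X then ∏ j, (g j).elim 1 (fun i => A i j) else 0 := by
  by_cases h : tset g ⊆ X
  · rw [if_pos h]
    refine Finset.prod_congr rfl fun j _ => ?_
    cases hg : g j with
    | none => rfl
    | some i =>
      have hi : i ∈ X := h (by simp [tset]; exact ⟨j, hg⟩)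
      simp [hi]
  · rw [if_neg h]
    obtain ⟨i, hiT, hiX⟩ := Finset.not_subset.mp h
    simp only [tset, mem_filter, mem_univ, true_and] at hiT
    obtain ⟨j, hj⟩ := hiT
    refine Finset.prod_eq_zero (mem_univ j) ?_
    simp [hj, hiX]

private noncomputable def fwd (σ : Fin m → Fin n) : Fin n → Option (Fin m) :=
  fun j => if h : ∃ i, σ i = j then some (Classical.choose h) else none

private noncomputable def bwd (hmn : m ≤ n) (g : Fin n → Option (Fin m)) : Fin m → Fin n :=
  fun i => if h : ∃ j, g j = some i then Classical.choose h
    else ⟨i.1, lt_of_lt_of_le i.2 hmn⟩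

private lemma fwd_apply {σ : Fin m → Fin n} (hσ : Function.Injective σ) (i : Fin m) :
    fwd σ (σ i) = some i := by
  have h : ∃ i', σ i' = σ i := ⟨i, rfl⟩
  rw [fwd, dif_pos h]
  exact congrArg some (hσ (Classical.choose_spec h))

private lemma fwd_eq_some {σ : Fin m → Fin n} {j : Fin n} {i : Fin m}
    (h : fwd σ j = some i) : σ i = j := by
  rw [fwd] at h
  split at h
  · next hex => rw [← Option.some_inj.mp h]; exact Classical.choose_spec hex
  · exact absurd h (by simp)

private lemma g_bwd (hmn : m ≤ n) {g : Fin n → Option (Fin m)} (hsurj : tset g = univ)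
    (i : Fin m) : g (bwd hmn g i) = some i := by
  have hi : i ∈ tset g := hsurj ▸ mem_univ i
  rw [tset, mem_filter] at hi
  have h : ∃ j, g j = some i := hi.2
  rw [bwd, dif_pos h]
  exact Classical.choose_spec h

private lemma bwd_inj (hmn : m ≤ n) {g : Fin n → Option (Fin m)} (hsurj : tset g = univ) :
    Function.Injective (bwd hmn g) := by
  intro i i' h
  have := (g_bwd hmn hsurj i).symm.trans (h ▸ g_bwd hmn hsurj i')
  exact Option.some_inj.mp this

private lemma bwd_uniq (hmn : m ≤ n) {g : Fin n → Option (Fin m)}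
    (hcard : (psupp g).card = m) (hsurj : tset g = univ)
    {j : Fin n} {i : Fin m} (hj : g j = some i) : j = bwd hmn g i := by
  have himg : Finset.image (bwd hmn g) univ = psupp g := by
    apply Finset.eq_of_subset_of_card_le
    · intro j hj
      obtain ⟨i', _, rfl⟩ := Finset.mem_image.mp hj
      rw [psupp, mem_filter]
      exact ⟨mem_univ _, by rw [g_bwd hmn hsurj]; rfl⟩
    · rw [hcard, Finset.card_image_of_injective _ (bwd_inj hmn hsurj), card_univ,
        Fintype.card_fin]
  have hjmem : j ∈ psupp g := by rw [psupp, mem_filter]; exact ⟨mem_univ _, by rw [hj]; rfl⟩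
  rw [← himg] at hjmem
  obtain ⟨i', _, rfl⟩ := Finset.mem_image.mp hjmem
  have : some i' = some i := (g_bwd hmn hsurj i').symm.trans hj
  rw [Option.some_inj.mp this]

private lemma step5 (hmn : m ≤ n) (A : Fin m → Fin n → R) :
    (∑ σ ∈ univ.filter (fun σ : Fin m → Fin n => Function.Injective σ),
        ∏ i, A i (σ i))
    = ∑ g ∈ univ.filter (fun g : Fin n → Option (Fin m) =>
          (psupp g).card = m ∧ tset g = univ),
        ∏ j, (g j).elim 1 (fun i => A i j) := by
  refine Finset.sum_nbij' fwd (bwd hmn) ?_ ?_ ?_ ?_ ?_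
  · -- fwd maps into target
    intro σ hσ
    simp only [mem_filter, mem_univ, true_and]
    rw [mem_filter] at hσ
    have hσ := hσ.2
    constructor
    · have : psupp (fwd σ) = Finset.image σ univ := by
        ext j
        simp only [psupp, mem_filter, mem_univ, true_and, Finset.mem_image]
        constructor
        · intro h
          obtain ⟨i, hi⟩ := Option.isSome_iff_exists.mp h
          exact ⟨i, fwd_eq_some hi⟩
        · rintro ⟨i, rfl⟩
          rw [fwd_apply hσ]; rfl
      rw [this, Finset.card_image_of_injective _ hσ, card_univ, Fintype.card_fin]
    · ext i
      simp only [tset, mem_filter, mem_univ, true_and, iff_true]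
      exact ⟨σ i, fwd_apply hσ i⟩
  · -- bwd maps back
    intro g hg
    rw [mem_filter] at hg ⊢
    exact ⟨mem_univ _, bwd_inj hmn hg.2.2⟩
  · -- left inverse
    intro σ hσ
    rw [mem_filter] at hσ
    have hσ := hσ.2
    funext i
    have h1 : fwd σ (σ i) = some i := fwd_apply hσ i
    have h : ∃ j, fwd σ j = some i := ⟨σ i, h1⟩
    rw [bwd, dif_pos h]
    exact (fwd_eq_some (Classical.choose_spec h)).symm
  · -- right inverse
    intro g hg
    rw [mem_filter] at hg
    obtain ⟨-, hcard, hsurj⟩ := hg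
    funext j
    cases hgj : g j with
    | none =>
      have hne : ¬∃ i, bwd hmn g i = j := by
        rintro ⟨i, hi⟩
        have := g_bwd hmn hsurj i
        rw [hi, hgj] at this
        exact Option.some_ne_none i this.symm
      rw [fwd, dif_neg hne]
    | some i =>
      have hj : j = bwd hmn g i := bwd_uniq hmn hcard hsurj hgj
      have h : ∃ i', bwd hmn g i' = j := ⟨i, hj.symm⟩
      rw [fwd, dif_pos h]
      have hspec := Classical.choose_spec h
      have h2 : g (bwd hmn g (Classical.choose h)) = some (Classical.choose h) :=
        g_bwd hmn hsurj (Classical.choose h)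
      rw [hspec, hgj] at h2
      exact h2.symm
  · -- values agree
    intro σ hσ
    rw [mem_filter] at hσ
    have hσ := hσ.2
    calc (∏ i, A i (σ i))
        = ∏ j ∈ Finset.image σ univ, (fwd σ j).elim 1 (fun i => A i j) := by
          rw [Finset.prod_image (fun i _ i' _ h => hσ h)]
          refine Finset.prod_congr rfl fun i _ => ?_
          rw [fwd_apply hσ]
          rfl
      _ = ∏ j, (fwd σ j).elim 1 (fun i => A i j) := by
          refine Finset.prod_subset (Finset.subset_univ _) ?_
          intro j _ hj
          have hne : ¬∃ i, σ i = j := by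
            rintro ⟨i, rfl⟩
            exact hj (Finset.mem_image_of_mem σ (mem_univ i))
          rw [fwd, dif_neg hne]
          rfl

end Ryser

/-- Transposed Ryser formula: the permanent equals
`∑_{X ⊆ M} (-1)^{m-|X|} ∑_p a_{X1}^{p_1} ⋯ a_{Xn}^{p_n}`, where the inner sum is
over binary sequences `p ∈ {0,1}^n` with `∑ p_j = m`, and `a_{Xj} = ∑_{i∈X} a_{ij}`. -/
theorem transposed_ryser {m n : ℕ} {R : Type*} [CommRing R] (hmn : m ≤ n)
    (A : Fin m → Fin n → R) :
    (∑ σ ∈ Finset.univ.filter (fun σ : Fin m → Fin n => Function.Injective σ),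
        ∏ i, A i (σ i)) =
      ∑ X : Finset (Fin m), (-1 : R) ^ (m - X.card) *
        ∑ p ∈ Finset.univ.filter (fun p : Fin n → Fin 2 => ∑ j, (p j : ℕ) = m),
          ∏ j, (∑ i ∈ X, A i j) ^ (p j : ℕ) := by
  have hrhs : (∑ X : Finset (Fin m), (-1 : R) ^ (m - X.card) *
        ∑ p ∈ Finset.univ.filter (fun p : Fin n → Fin 2 => ∑ j, (p j : ℕ) = m),
          ∏ j, (∑ i ∈ X, A i j) ^ (p j : ℕ))
      = ∑ g ∈ univ.filter (fun g : Fin n → Option (Fin m) =>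
            (psupp g).card = m ∧ tset g = univ),
          ∏ j, (g j).elim 1 (fun i => A i j) := by
    calc (∑ X : Finset (Fin m), (-1 : R) ^ (m - X.card) *
          ∑ p ∈ Finset.univ.filter (fun p : Fin n → Fin 2 => ∑ j, (p j : ℕ) = m),
            ∏ j, (∑ i ∈ X, A i j) ^ (p j : ℕ))
        = ∑ X : Finset (Fin m),
            ∑ g ∈ univ.filter (fun g : Fin n → Option (Fin m) => (psupp g).card = m),
              (-1 : R) ^ (m - X.card) *
                (if tset g ⊆ X then ∏ j, (g j).elim 1 (fun i => A i j) else 0) := by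
          refine Finset.sum_congr rfl fun X _ => ?_
          rw [step1 A X, Finset.mul_sum]
          exact Finset.sum_congr rfl fun g _ => by rw [indicator_eq]
      _ = ∑ g ∈ univ.filter (fun g : Fin n → Option (Fin m) => (psupp g).card = m),
            ∑ X : Finset (Fin m), (-1 : R) ^ (m - X.card) *
              (if tset g ⊆ X then ∏ j, (g j).elim 1 (fun i => A i j) else 0) :=
          Finset.sum_comm
      _ = ∑ g ∈ univ.filter (fun g : Fin n → Option (Fin m) => (psupp g).card = m),
            (if tset g = univ then ∏ j, (g j).elim 1 (fun i => A i j) else 0) :=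
          Finset.sum_congr rfl fun g _ => step3 _ _
      _ = ∑ g ∈ (univ.filter (fun g : Fin n → Option (Fin m) =>
              (psupp g).card = m)).filter (fun g => tset g = univ),
            ∏ j, (g j).elim 1 (fun i => A i j) := (Finset.sum_filter _ _).symm
      _ = _ := by rw [Finset.filter_filter]
  rw [hrhs]
  exact step5 hmn A
end

section
/- (Disjoint summation via inclusion–exclusion, Kennes' identity) Let U be a finite set and f, g functions from subsets of U to a commutative ring R. Then Σ_{S,T ⊆ U, S ∩ T = ∅} f(S)·g(T) = Σ_{X ⊆ U} (−1)^{|X|} · (Σ_{S ⊇ X} f(S)) · (Σ_{T ⊇ X} g(T)). -/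
open Finset

lemma sum_neg_one_pow_card_R {R : Type*} [CommRing R] {α : Type*} [DecidableEq α]
    (x : Finset α) : (∑ m ∈ x.powerset, (-1 : R) ^ m.card) = if x = ∅ then 1 else 0 := by
  have h := congrArg (Int.cast : ℤ → R) (Finset.sum_powerset_neg_one_pow_card (x := x))
  push_cast [apply_ite (Int.cast : ℤ → R)] at h
  simpa using h

/-- Kennes' identity: disjoint summation via inclusion–exclusion. -/
theorem disjoint_sum_inclusion_exclusion {U : Type*} [Fintype U] [DecidableEq U]
    {R : Type*} [CommRing R] (f g : Finset U → R) :
    (∑ S : Finset U, ∑ T ∈ Finset.univ.filter (fun T : Finset U => Disjoint S T),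
        f S * g T) =
      ∑ X : Finset U, (-1 : R) ^ X.card *
        (∑ S ∈ Finset.univ.filter (fun S : Finset U => X ⊆ S), f S) *
        (∑ T ∈ Finset.univ.filter (fun T : Finset U => X ⊆ T), g T) := by
  have rhs : ∀ X : Finset U, (-1 : R) ^ X.card *
        (∑ S ∈ Finset.univ.filter (fun S : Finset U => X ⊆ S), f S) *
        (∑ T ∈ Finset.univ.filter (fun T : Finset U => X ⊆ T), g T)
      = ∑ S : Finset U, ∑ T : Finset U,
          (if X ⊆ S ∧ X ⊆ T then (-1 : R) ^ X.card * (f S * g T) else 0) := by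
    intro X
    simp only [Finset.sum_filter, Finset.mul_sum, Finset.sum_mul]
    rw [Finset.sum_comm]
    refine Finset.sum_congr rfl fun S _ => Finset.sum_congr rfl fun T _ => ?_
    by_cases h1 : X ⊆ S <;> by_cases h2 : X ⊆ T <;>
      simp [h1, h2, mul_comm, mul_assoc, mul_left_comm]
  simp_rw [rhs]
  rw [Finset.sum_comm]
  refine Finset.sum_congr rfl fun S _ => ?_
  rw [Finset.sum_comm]
  rw [Finset.sum_filter]
  refine Finset.sum_congr rfl fun T _ => ?_
  have key : ∑ X : Finset U, (if X ⊆ S ∧ X ⊆ T then (-1 : R) ^ X.card * (f S * g T) else 0)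
      = (∑ X ∈ (S ∩ T).powerset, (-1 : R) ^ X.card) * (f S * g T) := by
    rw [Finset.sum_mul, ← Finset.sum_filter]
    refine Finset.sum_congr ?_ fun _ _ => rfl
    ext X
    simp only [Finset.mem_filter, Finset.mem_univ, true_and, Finset.mem_powerset,
      Finset.subset_inter_iff]
  rw [key, sum_neg_one_pow_card_R]
  by_cases h : Disjoint S T
  · simp [h, Finset.disjoint_iff_inter_eq_empty.mp h]
  · rw [Finset.disjoint_iff_inter_eq_empty] at h
    simp [h, Finset.disjoint_iff_inter_eq_empty]
end

section
/- Let U be a finite set and f, g functions from subsets of U to a commutative ring, and suppose f vanishes outside a family F of subsets of U and g vanishes outside a family G. Then Σ_{S∈F, T∈G, S∩T=∅} f(S)g(T) = Σ_{X ∈ ↓F ∩ ↓G} (−1)^{|X|} (Σ_{S ⊇ X, S∈F} f(S))(Σ_{T ⊇ X, T∈G} g(T)), where ↓F denotes the downward closure of F. -/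
open Finset

theorem neg_one_pow_sum {U : Type*} [DecidableEq U] {R : Type*} [CommRing R] (s : Finset U) :
    (∑ m ∈ s.powerset, (-1 : R) ^ m.card) = if s = ∅ then 1 else 0 := by
  have := @Finset.sum_powerset_neg_one_pow_card U _ s
  have h : ((∑ m ∈ s.powerset, (-1 : ℤ) ^ m.card : ℤ) : R) = ∑ m ∈ s.powerset, (-1 : R) ^ m.card := by
    push_cast; ring
  rw [← h, this]
  split <;> simp

/-- Kennes' identity with supports: if `f` vanishes outside `F` and `g` outside `G`,
the disjoint-pair sum can be computed summing `X` only over `↓F ∩ ↓G`. -/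
theorem disjoint_sum_supported {U : Type*} [Fintype U] [DecidableEq U]
    {R : Type*} [CommRing R] (f g : Finset U → R) (F G : Finset (Finset U))
    (hf : ∀ S ∉ F, f S = 0) (hg : ∀ T ∉ G, g T = 0) :
    (∑ S ∈ F, ∑ T ∈ G.filter (fun T => Disjoint S T), f S * g T) =
      ∑ X ∈ ((Finset.univ : Finset U).powerset.filter
              (fun X => ∃ S ∈ F, X ⊆ S)) ∩
            ((Finset.univ : Finset U).powerset.filter
              (fun X => ∃ T ∈ G, X ⊆ T)),
        (-1 : R) ^ X.card * (∑ S ∈ F.filter (fun S => X ⊆ S), f S) *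
          (∑ T ∈ G.filter (fun T => X ⊆ T), g T) := by
  classical
  set term : Finset U → R := fun X =>
    (-1 : R) ^ X.card * (∑ S ∈ F.filter (fun S => X ⊆ S), f S) *
      (∑ T ∈ G.filter (fun T => X ⊆ T), g T) with hterm
  have hsub : (((Finset.univ : Finset U).powerset.filter (fun X => ∃ S ∈ F, X ⊆ S)) ∩
      ((Finset.univ : Finset U).powerset.filter (fun X => ∃ T ∈ G, X ⊆ T)))
      ⊆ (Finset.univ : Finset U).powerset :=
    (inter_subset_left).trans (filter_subset _ _)
  have hext : ∑ X ∈ (((Finset.univ : Finset U).powerset.filter (fun X => ∃ S ∈ F, X ⊆ S)) ∩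
      ((Finset.univ : Finset U).powerset.filter (fun X => ∃ T ∈ G, X ⊆ T))), term X
      = ∑ X ∈ (Finset.univ : Finset U).powerset, term X := by
    refine Finset.sum_subset hsub fun X hX hXn => ?_
    have hXn' : ¬(∃ S ∈ F, X ⊆ S) ∨ ¬(∃ T ∈ G, X ⊆ T) := by
      by_contra h
      push_neg at h
      exact hXn (mem_inter.2 ⟨mem_filter.2 ⟨hX, h.1⟩, mem_filter.2 ⟨hX, h.2⟩⟩)
    rcases hXn' with hS | hT
    · have : F.filter (fun S => X ⊆ S) = ∅ := by
        rw [filter_eq_empty_iff]; intro S hS' hXS; exact hS ⟨S, hS', hXS⟩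
      simp [hterm, this]
    · have : G.filter (fun T => X ⊆ T) = ∅ := by
        rw [filter_eq_empty_iff]; intro T hT' hXT; exact hT ⟨T, hT', hXT⟩
      simp [hterm, this]
  rw [hext]
  have expand : ∀ X : Finset U, term X =
      ∑ S ∈ F, ∑ T ∈ G, (if X ⊆ S ∧ X ⊆ T then (-1:R)^X.card * f S * g T else 0) := by
    intro X
    rw [hterm]
    simp only [sum_filter]
    rw [mul_assoc, Finset.sum_mul_sum, Finset.mul_sum]
    refine sum_congr rfl fun S _ => ?_
    rw [Finset.mul_sum]
    refine sum_congr rfl fun T _ => ?_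
    by_cases h1 : X ⊆ S <;> by_cases h2 : X ⊆ T <;> simp [h1, h2] <;> ring
  simp only [expand]
  rw [Finset.sum_comm]
  refine sum_congr rfl fun S _ => ?_
  rw [Finset.sum_comm]
  rw [Finset.sum_filter]
  refine sum_congr rfl fun T _ => ?_
  have hmem : ∀ X : Finset U, (X ⊆ S ∧ X ⊆ T) ↔ X ∈ (S ∩ T).powerset := by
    intro X; rw [mem_powerset, subset_inter_iff]
  simp only [hmem]
  rw [Finset.sum_ite_mem, Finset.inter_eq_right.2 (fun X hX => mem_powerset.2 (subset_univ _))]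
  simp only [mul_assoc]
  rw [← Finset.sum_mul, neg_one_pow_sum]
  simp only [Finset.disjoint_iff_inter_eq_empty]
  split <;> simp
end

section
/- Over a commutative ring, for a square n×n matrix A, the rectangular Ryser formula specializes to the classical Ryser formula: per A = (−1)^n Σ_{X ⊆ {1,...,n}} (−1)^{|X|} Π_{i=1}^n (Σ_{j ∈ X} a_{ij}). -/
open Finset

private theorem ryser_key {n : ℕ} {R : Type*} [CommRing R] (S : Finset (Fin n)) :
    (∑ X : Finset (Fin n), if S ⊆ X then (-1 : R) ^ X.card else 0)
      = if S = Finset.univ then (-1 : R) ^ n else 0 := by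
  classical
  rw [← Finset.sum_filter]
  have h1 : ∑ X ∈ Finset.univ.filter (fun X => S ⊆ X), (-1 : R) ^ X.card
      = ∑ Y ∈ Sᶜ.powerset, (-1 : R) ^ (S ∪ Y).card := by
    refine Finset.sum_nbij' (fun X => X \ S) (fun Y => S ∪ Y) ?_ ?_ ?_ ?_ ?_
    · intro X hX
      simp only [Finset.mem_filter, Finset.mem_univ, true_and] at hX
      rw [Finset.mem_powerset, Finset.subset_compl_comm]
      intro x hx
      simp [hx]
    · intro Y hY
      simp
    · intro X hX
      simp only [Finset.mem_filter, Finset.mem_univ, true_and] at hX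
      exact Finset.union_sdiff_of_subset hX
    · intro Y hY
      rw [Finset.mem_powerset] at hY
      show (S ∪ Y) \ S = Y
      rw [Finset.union_sdiff_cancel_left]
      exact Finset.disjoint_left.mpr fun a ha hb => (Finset.mem_compl.mp (hY hb)) ha
    · intro X hX
      simp only [Finset.mem_filter, Finset.mem_univ, true_and] at hX
      rw [Finset.union_sdiff_of_subset hX]
  rw [h1]
  have h2 : ∀ Y ∈ Sᶜ.powerset, (-1 : R) ^ (S ∪ Y).card = (-1 : R) ^ S.card * (-1 : R) ^ Y.card := by
    intro Y hY
    rw [Finset.mem_powerset] at hY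
    rw [Finset.card_union_of_disjoint, pow_add]
    exact Finset.disjoint_left.mpr fun a ha hb => (Finset.mem_compl.mp (hY hb)) ha
  rw [Finset.sum_congr rfl h2, ← Finset.mul_sum]
  have h3 : (∑ Y ∈ Sᶜ.powerset, (-1 : R) ^ Y.card)
      = ((∑ Y ∈ Sᶜ.powerset, (-1 : ℤ) ^ Y.card : ℤ) : R) := by push_cast; rfl
  rw [h3, Finset.sum_powerset_neg_one_pow_card]
  by_cases h : S = Finset.univ
  · simp [h, Finset.card_univ]
  · have : Sᶜ ≠ ∅ := by
      simp [Finset.compl_eq_empty_iff]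
      exact h
    simp [this, h]

/-- Classical Ryser formula for a square matrix over a commutative ring. -/
theorem ryser_square {n : ℕ} {R : Type*} [CommRing R] (A : Fin n → Fin n → R) :
    (∑ σ : Equiv.Perm (Fin n), ∏ i, A i (σ i)) =
      (-1 : R) ^ n *
        ∑ X : Finset (Fin n), (-1 : R) ^ X.card * ∏ i, ∑ j ∈ X, A i j := by
  classical
  have step1 : ∀ X : Finset (Fin n),
      (-1 : R) ^ X.card * ∏ i, ∑ j ∈ X, A i j
        = ∑ g : Fin n → Fin n,
            (if Finset.univ.image g ⊆ X then (-1 : R) ^ X.card else 0) * ∏ i, A i (g i) := by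
    intro X
    rw [Finset.prod_univ_sum, Finset.mul_sum]
    simp only [ite_mul, zero_mul]
    rw [← Finset.sum_filter]
    apply Finset.sum_congr
    · ext g
      simp [Fintype.mem_piFinset, Finset.image_subset_iff]
    · intros; rfl
  rw [Finset.sum_congr rfl (fun X _ => step1 X), Finset.sum_comm]
  have step2 : ∀ g : Fin n → Fin n,
      (∑ X : Finset (Fin n),
        (if Finset.univ.image g ⊆ X then (-1:R)^X.card else 0) * ∏ i, A i (g i))
        = (if Finset.univ.image g = Finset.univ then (-1:R)^n else 0) * ∏ i, A i (g i) := by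
    intro g
    rw [← Finset.sum_mul, ryser_key]
  rw [Finset.sum_congr rfl (fun g _ => step2 g)]
  simp only [ite_mul, zero_mul]
  rw [← Finset.sum_filter, ← Finset.mul_sum, ← mul_assoc, ← pow_add]
  rw [show ((-1:R))^(n+n) = 1 from Even.neg_one_pow ⟨n, rfl⟩, one_mul]
  refine Finset.sum_nbij (fun σ => ⇑σ) ?_ ?_ ?_ ?_
  · intro σ _
    simp [Finset.mem_filter]
  · intro σ _ τ _ h
    exact Equiv.coe_fn_injective h
  · intro g hg
    simp only [Finset.coe_filter, Finset.mem_univ, true_and, Set.mem_setOf_eq] at hg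
    have hsurj : Function.Surjective g := by
      intro y
      have : y ∈ Finset.univ.image g := by rw [hg]; exact Finset.mem_univ y
      obtain ⟨x, _, hx⟩ := Finset.mem_image.mp this
      exact ⟨x, hx⟩
    have hbij : Function.Bijective g := Finite.surjective_iff_bijective.mp hsurj
    exact ⟨Equiv.ofBijective g hbij, Finset.mem_coe.mpr (Finset.mem_univ _), rfl⟩
  · intro σ _
    rfl
end

section
/- Let U be a finite set. For functions f, g from subsets of U to a commutative ring, define the 'disjoint product' d = Σ_{S ∩ T = ∅} f(S)g(T). If f is supported on sets of size exactly k and g on sets of size exactly l with k + l ≤ |U|, then d = Σ_{X ⊆ U, |X| ≤ min(k,l)} (−1)^{|X|} (Σ_{S ⊇ X} f(S))(Σ_{T ⊇ X} g(T)). -/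
open Finset

/-- If `f` is supported on sets of size exactly `k` and `g` on sets of size
exactly `l` with `k + l ≤ |U|`, the disjoint-pair sum can be computed with the
outer sum restricted to `|X| ≤ min k l`. -/
theorem disjoint_sum_graded {U : Type*} [Fintype U] [DecidableEq U]
    {R : Type*} [CommRing R] (f g : Finset U → R) (k l : ℕ)
    (hkl : k + l ≤ Fintype.card U)
    (hf : ∀ S : Finset U, S.card ≠ k → f S = 0)
    (hg : ∀ T : Finset U, T.card ≠ l → g T = 0) :
    (∑ S : Finset U, ∑ T ∈ Finset.univ.filter (fun T : Finset U => Disjoint S T),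
        f S * g T) =
      ∑ X ∈ (Finset.univ : Finset U).powerset.filter (fun X => X.card ≤ min k l),
        (-1 : R) ^ X.card *
          (∑ S ∈ Finset.univ.filter (fun S : Finset U => X ⊆ S), f S) *
          (∑ T ∈ Finset.univ.filter (fun T : Finset U => X ⊆ T), g T) := by
  classical
  rw [powerset_univ]
  rw [Finset.sum_filter_of_ne (fun X _ hne => by
    by_contra h
    push_neg at h
    rcases (min_lt_iff.mp h) with h' | h'
    · apply hne
      rw [Finset.sum_eq_zero (fun S hS => hf S ?_)]
      · ring
      · have := Finset.card_le_card (Finset.mem_filter.mp hS).2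
        omega
    · apply hne
      rw [Finset.sum_eq_zero (fun T hT => hg T ?_)]
      · ring
      · have := Finset.card_le_card (Finset.mem_filter.mp hT).2
        omega)]
  have key : ∀ S T : Finset U,
      (∑ X : Finset U, if X ⊆ S ∧ X ⊆ T then (-1 : R) ^ X.card else 0)
        = if Disjoint S T then 1 else 0 := by
    intro S T
    rw [← Finset.sum_filter]
    have hfil : (univ.filter fun X : Finset U => X ⊆ S ∧ X ⊆ T) = (S ∩ T).powerset := by
      ext X; rw [Finset.mem_filter, Finset.mem_powerset, Finset.subset_inter_iff]; simp
    rw [hfil]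
    have h := congrArg (Int.cast : ℤ → R) (Finset.sum_powerset_neg_one_pow_card (x := S ∩ T))
    push_cast at h
    rw [h]
    simp [Finset.disjoint_iff_inter_eq_empty]
  have expand : ∀ X : Finset U,
      (-1 : R) ^ X.card *
          (∑ S ∈ Finset.univ.filter (fun S : Finset U => X ⊆ S), f S) *
          (∑ T ∈ Finset.univ.filter (fun T : Finset U => X ⊆ T), g T)
        = ∑ S : Finset U, ∑ T : Finset U,
            (if X ⊆ S ∧ X ⊆ T then (-1 : R) ^ X.card else 0) * (f S * g T) := by
    intro X
    simp only [Finset.sum_filter, Finset.mul_sum, Finset.sum_mul]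
    rw [Finset.sum_comm]
    refine Finset.sum_congr rfl fun S _ => Finset.sum_congr rfl fun T _ => ?_
    split_ifs <;> simp_all <;> ring
  rw [Finset.sum_congr rfl fun X _ => expand X, Finset.sum_comm]
  refine Finset.sum_congr rfl fun S _ => ?_
  rw [Finset.sum_comm]
  rw [Finset.sum_filter]
  refine Finset.sum_congr rfl fun T _ => ?_
  rw [← Finset.sum_mul, key]
  split_ifs <;> simp
end
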